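/- Let p ≥ 1 be an integer, let 1 ≤ k ≤ d−1, and let {(V_j, ω_j)}_{j=1}^n be a tight p-fusion frame in ℝ^d in which every subspace V_j has dimension k. Then for every integer p' with 1 ≤ p' ≤ p, the same family {(V_j, ω_j)}_{j=1}^n is a tight p'-fusion frame, i.e. there is a constant A_{p'} > 0 with Σ_{j=1}^n ω_j ‖P_{V_j}(x)‖^{2p'} = A_{p'} ‖x‖^{2p'} for all x ∈ ℝ^d. -/

import Mathlib

open scoped BigOperators

/-- The orthogonal projection onto a subspace `V` of `ℝ^d`, as a linear endomorphism. -/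
noncomputable def proj {d : ℕ} (V : Submodule ℝ (EuclideanSpace ℝ (Fin d))) :
    EuclideanSpace ℝ (Fin d) →ₗ[ℝ] EuclideanSpace ℝ (Fin d) :=
  V.subtype ∘ₗ V.orthogonalProjection.toLinearMap


open Polynomial RealInnerProductSpace

lemma proj_inner_swap {d : ℕ} (W : Submodule ℝ (EuclideanSpace ℝ (Fin d)))
    (u v : EuclideanSpace ℝ (Fin d)) :
    ⟪proj W u, v⟫ = ⟪u, proj W v⟫ :=
  Submodule.inner_starProjection_left_eq_right W u v

lemma proj_coe_mem {d : ℕ} (W : Submodule ℝ (EuclideanSpace ℝ (Fin d)))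
    {v : EuclideanSpace ℝ (Fin d)} (hv : v ∈ W) : proj W v = v := by
  have := Submodule.orthogonalProjection_mem_subspace_eq_self (K := W) ⟨v, hv⟩
  simpa [proj] using congrArg (Subtype.val) this

lemma proj_proj_inner {d : ℕ} (W : Submodule ℝ (EuclideanSpace ℝ (Fin d)))
    (u v : EuclideanSpace ℝ (Fin d)) :
    ⟪proj W u, proj W v⟫ = ⟪proj W u, v⟫ := by
  rw [proj_inner_swap, proj_inner_swap]
  congr 1
  exact proj_coe_mem W (by simp [proj])

lemma norm_proj_add_smul {d : ℕ} (W : Submodule ℝ (EuclideanSpace ℝ (Fin d)))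
    (x y : EuclideanSpace ℝ (Fin d)) (t : ℝ) :
    ‖proj W (x + t • y)‖ ^ 2 =
      ‖proj W x‖ ^ 2 + (2 * ⟪proj W x, y⟫) * t + ‖proj W y‖ ^ 2 * t ^ 2 := by
  rw [map_add, map_smul, norm_add_sq_real, inner_smul_right, norm_smul]
  rw [proj_proj_inner, Real.norm_eq_abs, mul_pow, sq_abs]
  ring

lemma coeff0_pow (a b c : ℝ) (p : ℕ) :
    (((C a + C b * X + C c * X ^ 2) ^ p : ℝ[X])).coeff 0 = a ^ p := by
  rw [coeff_zero_eq_eval_zero]; simp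

lemma coeff1_pow (a b c : ℝ) :
    ∀ p : ℕ, (((C a + C b * X + C c * X ^ 2) ^ (p + 1) : ℝ[X])).coeff 1
      = (p + 1) * a ^ p * b := by
  intro p
  induction p with
  | zero => simp
  | succ q ih =>
    rw [pow_succ, coeff_mul, Finset.Nat.sum_antidiagonal_eq_sum_range_succ_mk]
    simp [Finset.sum_range_succ, ih, coeff0_pow]
    ring

lemma coeff2_pow (a b c : ℝ) :
    ∀ p : ℕ, (((C a + C b * X + C c * X ^ 2) ^ (p + 2) : ℝ[X])).coeff 2
      = (p + 2) * (p + 1) / 2 * a ^ p * b ^ 2 + (p + 2) * a ^ (p + 1) * c := by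
  intro p
  induction p with
  | zero =>
    rw [pow_two, coeff_mul, Finset.Nat.sum_antidiagonal_eq_sum_range_succ_mk]
    simp [Finset.sum_range_succ, coeff_X]
    ring
  | succ q ih =>
    rw [show q + 1 + 2 = (q + 2) + 1 by ring, pow_succ, coeff_mul,
      Finset.Nat.sum_antidiagonal_eq_sum_range_succ_mk]
    simp [Finset.sum_range_succ, ih, coeff0_pow, coeff1_pow, coeff_X]
    ring

lemma norm_sq_eq_sum {d : ℕ} (y : EuclideanSpace ℝ (Fin d)) :
    ‖y‖ ^ 2 = ∑ i, (y i) ^ 2 := by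
  rw [← real_inner_self_eq_norm_sq, PiLp.inner_apply]
  simp [sq]

lemma sum_norm_proj_single_sq {d : ℕ} (W : Submodule ℝ (EuclideanSpace ℝ (Fin d))) :
    ∑ i : Fin d, ‖proj W (EuclideanSpace.single i (1:ℝ))‖ ^ 2
      = (Module.finrank ℝ W : ℝ) := by
  classical
  let w := stdOrthonormalBasis ℝ W
  have key : ∀ i : Fin d, ‖proj W (EuclideanSpace.single i (1:ℝ))‖ ^ 2
      = ∑ m, ((w m : EuclideanSpace ℝ (Fin d)) i) ^ 2 := by
    intro i
    set v : W := W.orthogonalProjection (EuclideanSpace.single i (1:ℝ)) with hv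
    have h1 : ‖proj W (EuclideanSpace.single i (1:ℝ))‖ = ‖v‖ := by
      simp [proj, hv]
    have h2 : ‖v‖ ^ 2 = ∑ m, (⟪w m, v⟫ : ℝ) ^ 2 := by
      rw [← real_inner_self_eq_norm_sq, ← OrthonormalBasis.sum_inner_mul_inner w v v]
      congr 1; ext m
      rw [real_inner_comm v (w m), sq]
    have h3 : ∀ m, (⟪w m, v⟫ : ℝ) = (w m : EuclideanSpace ℝ (Fin d)) i := by
      intro m
      have : (⟪w m, v⟫ : ℝ)
          = ⟪(w m : EuclideanSpace ℝ (Fin d)), proj W (EuclideanSpace.single i (1:ℝ))⟫ := by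
        rfl
      rw [this, ← proj_inner_swap, proj_coe_mem W (w m).2,
        EuclideanSpace.inner_single_right]
      simp
    rw [h1, h2]
    exact Finset.sum_congr rfl fun m _ => by rw [h3]
  rw [Finset.sum_congr rfl fun i _ => key i, Finset.sum_comm]
  have : ∀ m, ∑ i : Fin d, ((w m : EuclideanSpace ℝ (Fin d)) i) ^ 2 = 1 := by
    intro m
    rw [← norm_sq_eq_sum]
    have : ‖(w m : EuclideanSpace ℝ (Fin d))‖ = 1 := by
      rw [Submodule.norm_coe]; exact w.orthonormal.1 m
    rw [this]; norm_num
  simp [this]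

lemma norm_add_smul_sq {d : ℕ} (x y : EuclideanSpace ℝ (Fin d)) (t : ℝ) :
    ‖x + t • y‖ ^ 2 = ‖x‖ ^ 2 + (2 * ⟪x, y⟫) * t + ‖y‖ ^ 2 * t ^ 2 := by
  rw [norm_add_sq_real, inner_smul_right, norm_smul, Real.norm_eq_abs, mul_pow, sq_abs]
  ring

lemma step {d n : ℕ} (k : ℕ) (hk : 1 ≤ k)
    (V : Fin n → Submodule ℝ (EuclideanSpace ℝ (Fin d)))
    (hVdim : ∀ j, Module.finrank ℝ (V j) = k)
    (ω : Fin n → ℝ) (m : ℕ) (hm : 1 ≤ m) (B : ℝ)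
    (hid : ∀ x : EuclideanSpace ℝ (Fin d),
      ∑ j, ω j * (‖proj (V j) x‖ ^ 2) ^ (m + 1) = B * (‖x‖ ^ 2) ^ (m + 1)) :
    ∀ x : EuclideanSpace ℝ (Fin d),
      ∑ j, ω j * (‖proj (V j) x‖ ^ 2) ^ m
        = (B * (2 * m + d) / (2 * m + k)) * (‖x‖ ^ 2) ^ m := by
  obtain ⟨m', rfl⟩ : ∃ m', m = m' + 1 := ⟨m - 1, by omega⟩
  intro x
  classical
  set E : Fin d → EuclideanSpace ℝ (Fin d) := fun i => EuclideanSpace.single i 1 with hE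
  set a : Fin n → ℝ := fun j => ‖proj (V j) x‖ ^ 2 with ha
  set b : Fin n → Fin d → ℝ := fun j i => 2 * ⟪proj (V j) x, E i⟫ with hb
  set c : Fin n → Fin d → ℝ := fun j i => ‖proj (V j) (E i)‖ ^ 2 with hc
  have hEnorm : ∀ i, ‖E i‖ = 1 := by
    intro i; simp [hE, EuclideanSpace.norm_single]
  have hxE : ∀ i, (⟪x, E i⟫ : ℝ) = x i := by
    intro i; simp [hE, EuclideanSpace.inner_single_right]
  have hpoly : ∀ i : Fin d,
      (∑ j, C (ω j) * (C (a j) + C (b j i) * X + C (c j i) * X ^ 2) ^ (m' + 2) : ℝ[X])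
        = C B * (C (‖x‖ ^ 2) + C (2 * x i) * X + C (1:ℝ) * X ^ 2) ^ (m' + 2) := by
    intro i
    apply Polynomial.funext
    intro t
    rw [Polynomial.eval_finset_sum]
    simp only [eval_mul, eval_pow, eval_add, eval_C, eval_X]
    have h1 : ∀ j, a j + b j i * t + c j i * t ^ 2 = ‖proj (V j) (x + t • E i)‖ ^ 2 := by
      intro j; rw [norm_proj_add_smul]
    have h2 : ‖x‖ ^ 2 + 2 * x i * t + 1 * t ^ 2 = ‖x + t • E i‖ ^ 2 := by
      rw [norm_add_smul_sq, hxE i, hEnorm i]; ring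
    calc ∑ j, ω j * (a j + b j i * t + c j i * t ^ 2) ^ (m' + 2)
        = ∑ j, ω j * (‖proj (V j) (x + t • E i)‖ ^ 2) ^ (m' + 2) := by
          exact Finset.sum_congr rfl fun j _ => by rw [h1 j]
      _ = B * (‖x + t • E i‖ ^ 2) ^ (m' + 2) := hid (x + t • E i)
      _ = B * (‖x‖ ^ 2 + 2 * x i * t + 1 * t ^ 2) ^ (m' + 2) := by rw [h2]
  have hsum : ∀ i : Fin d,
      ∑ j, ω j * (((m' : ℝ) + 2) * ((m' : ℝ) + 1) / 2 * a j ^ m' * b j i ^ 2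
          + ((m' : ℝ) + 2) * a j ^ (m' + 1) * c j i)
        = B * (((m' : ℝ) + 2) * ((m' : ℝ) + 1) / 2 * (‖x‖ ^ 2) ^ m' * (2 * x i) ^ 2
          + ((m' : ℝ) + 2) * (‖x‖ ^ 2) ^ (m' + 1) * 1) := by
    intro i
    have h := congrArg (fun P : ℝ[X] => P.coeff 2) (hpoly i)
    simp only [Polynomial.finset_sum_coeff, Polynomial.coeff_C_mul, coeff2_pow] at h
    exact h
  have hB2 : ∀ j, ∑ i, b j i ^ 2 = 4 * a j := by
    intro j
    have hb' : ∀ i, b j i = 2 * (proj (V j) x) i := by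
      intro i; simp [hb, hE, EuclideanSpace.inner_single_right]
    calc ∑ i, b j i ^ 2 = ∑ i, 4 * ((proj (V j) x) i) ^ 2 := by
          exact Finset.sum_congr rfl fun i _ => by rw [hb' i]; ring
      _ = 4 * ∑ i, ((proj (V j) x) i) ^ 2 := by rw [Finset.mul_sum]
      _ = 4 * a j := by rw [← norm_sq_eq_sum, ha]
  have hC : ∀ j, ∑ i, c j i = (k : ℝ) := by
    intro j
    rw [hc]
    simpa [hVdim j] using sum_norm_proj_single_sq (V j)
  have hX : ∑ i, (2 * x i) ^ 2 = 4 * ‖x‖ ^ 2 := by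
    calc ∑ i, (2 * x i) ^ 2 = 4 * ∑ i, (x i) ^ 2 := by
          rw [Finset.mul_sum]; exact Finset.sum_congr rfl fun i _ => by ring
      _ = 4 * ‖x‖ ^ 2 := by rw [← norm_sq_eq_sum]
  set c1 : ℝ := ((m' : ℝ) + 2) * ((m' : ℝ) + 1) / 2 with hc1
  set c2 : ℝ := (m' : ℝ) + 2 with hc2
  set q : ℝ := ‖x‖ ^ 2 with hq
  have H : ∑ i, ∑ j, ω j * (c1 * a j ^ m' * b j i ^ 2 + c2 * a j ^ (m' + 1) * c j i)
      = ∑ i : Fin d, B * (c1 * q ^ m' * (2 * x i) ^ 2 + c2 * q ^ (m' + 1) * 1) :=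
    Finset.sum_congr rfl fun i _ => hsum i
  have HL : ∑ i, ∑ j, ω j * (c1 * a j ^ m' * b j i ^ 2 + c2 * a j ^ (m' + 1) * c j i)
      = (4 * c1 + c2 * k) * ∑ j, ω j * a j ^ (m' + 1) := by
    rw [Finset.sum_comm, Finset.mul_sum]
    refine Finset.sum_congr rfl fun j _ => ?_
    have : ∑ i, ω j * (c1 * a j ^ m' * b j i ^ 2 + c2 * a j ^ (m' + 1) * c j i)
        = ω j * (c1 * a j ^ m' * (4 * a j) + c2 * a j ^ (m' + 1) * k) := by
      rw [← Finset.mul_sum]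
      congr 1
      rw [Finset.sum_add_distrib, ← Finset.mul_sum, ← Finset.mul_sum, hB2 j, hC j]
    rw [this, pow_succ]
    ring
  have HR : ∑ i : Fin d, B * (c1 * q ^ m' * (2 * x i) ^ 2 + c2 * q ^ (m' + 1) * 1)
      = (4 * c1 + c2 * d) * (B * q ^ (m' + 1)) := by
    rw [← Finset.mul_sum, Finset.sum_add_distrib, ← Finset.mul_sum, hX,
      Finset.sum_const, Finset.card_univ, Fintype.card_fin]
    rw [pow_succ]
    ring
  rw [HL, HR] at H
  have hpos : (4 * c1 + c2 * k) ≠ 0 := by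
    rw [hc1, hc2]
    have : (0:ℝ) < 4 * (((m' : ℝ) + 2) * ((m' : ℝ) + 1) / 2) + ((m' : ℝ) + 2) * k := by
      have h1 : (0:ℝ) ≤ (m' : ℝ) := Nat.cast_nonneg m'
      have h2 : (1:ℝ) ≤ (k : ℝ) := by exact_mod_cast Nat.one_le_cast.mpr hk
      nlinarith
    linarith [this]
  have hden : (2 * ((m' : ℝ) + 1) + k) ≠ 0 := by
    have h1 : (0:ℝ) ≤ (m' : ℝ) := Nat.cast_nonneg m'
    have h2 : (1:ℝ) ≤ (k : ℝ) := by exact_mod_cast Nat.one_le_cast.mpr hk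
    nlinarith
  have hS : ∑ j, ω j * a j ^ (m' + 1)
      = (B * (2 * ((m' : ℝ) + 1) + d) / (2 * ((m' : ℝ) + 1) + k)) * q ^ (m' + 1) := by
    have key : (4 * c1 + c2 * k) * (∑ j, ω j * a j ^ (m' + 1))
        = (4 * c1 + c2 * k) * ((B * (2 * ((m' : ℝ) + 1) + d) / (2 * ((m' : ℝ) + 1) + k)) * q ^ (m' + 1)) := by
      rw [H]
      rw [hc1, hc2]
      field_simp
      ring
    exact mul_left_cancel₀ hpos key
  calc ∑ j, ω j * (‖proj (V j) x‖ ^ 2) ^ (m' + 1)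
      = ∑ j, ω j * a j ^ (m' + 1) := rfl
    _ = (B * (2 * ((m' : ℝ) + 1) + d) / (2 * ((m' : ℝ) + 1) + k)) * q ^ (m' + 1) := hS
    _ = B * (2 * ↑(m' + 1) + ↑d) / (2 * ↑(m' + 1) + ↑k) * (‖x‖ ^ 2) ^ (m' + 1) := by
        push_cast; rfl

theorem stmt11 {d n k : ℕ} (p : ℕ) (hp : 1 ≤ p) (hk1 : 1 ≤ k) (hk2 : k ≤ d - 1)
    (V : Fin n → Submodule ℝ (EuclideanSpace ℝ (Fin d)))
    (hVdim : ∀ j, Module.finrank ℝ (V j) = k)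
    (ω : Fin n → ℝ) (hω : ∀ j, 0 < ω j)
    (A : ℝ) (hA : 0 < A)
    (h : ∀ x : EuclideanSpace ℝ (Fin d),
      ∑ j, ω j * ‖proj (V j) x‖ ^ (2 * p) = A * ‖x‖ ^ (2 * p)) :
    ∀ p' : ℕ, 1 ≤ p' → p' ≤ p →
      ∃ A' : ℝ, 0 < A' ∧ ∀ x : EuclideanSpace ℝ (Fin d),
        ∑ j, ω j * ‖proj (V j) x‖ ^ (2 * p') = A' * ‖x‖ ^ (2 * p') := by
  have key : ∀ t : ℕ, ∀ m : ℕ, 1 ≤ m → m + t = p →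
      ∃ A' : ℝ, 0 < A' ∧ ∀ x : EuclideanSpace ℝ (Fin d),
        ∑ j, ω j * (‖proj (V j) x‖ ^ 2) ^ m = A' * (‖x‖ ^ 2) ^ m := by
    intro t
    induction t with
    | zero =>
      intro m hm1 hmp
      refine ⟨A, hA, fun x => ?_⟩
      have := h x
      simp only [pow_mul] at this
      rw [show m = p by omega]
      exact this
    | succ s ih =>
      intro m hm1 hmp
      obtain ⟨B, hB, hBid⟩ := ih (m + 1) (by omega) (by omega)
      refine ⟨B * (2 * m + d) / (2 * m + k), ?_, step k hk1 V hVdim ω m hm1 B hBid⟩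
      have hm' : (1:ℝ) ≤ (m : ℝ) := by exact_mod_cast hm1
      have hk' : (1:ℝ) ≤ (k : ℝ) := by exact_mod_cast hk1
      have hd' : (0:ℝ) ≤ (d : ℝ) := Nat.cast_nonneg d
      apply div_pos
      · nlinarith
      · nlinarith
  intro p' hp'1 hp'2
  obtain ⟨A', hA', hid⟩ := key (p - p') p' hp'1 (by omega)
  refine ⟨A', hA', fun x => ?_⟩
  simpa only [pow_mul] using hid x
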